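/- Let G be an abelian group with an element of order at least 3. Then the group of permutations φ of G satisfying φ(gh) ∈ {φ(g)h, φ(g)h^{-1}} for all g, h ∈ G is exactly the semidirect product of G (acting by left translations) with the order-2 group generated by the inversion map; in particular it contains G as a subgroup of index 2. -/

import Mathlib

private lemma xi_key {G : Type*} [CommGroup G] (ψ : G → G)
    (H : ∀ g h : G, ψ (g * h) = ψ g * h ∨ ψ (g * h) = ψ g * h⁻¹)
    (h1 : ψ 1 = 1) (x y : G) (hx2 : x * x ≠ 1) (hy2 : y * y ≠ 1)
    (hx : ψ x = x) (hy : ψ y = y⁻¹) : False := by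
  -- Step 1 : ψ (x*y) = x*y and (x*y)*(x*y) = 1
  have hbase := H 1 (x * y)
  simp only [one_mul, h1] at hbase
  have hA := H x y; rw [hx] at hA
  have hB := H y x; rw [hy, mul_comm y x] at hB
  have hxy : ψ (x * y) = x * y := by
    rcases hA with hA | hA
    · exact hA
    · rcases hbase with hb | hb
      · rw [hA] at hb
        exact absurd (mul_eq_one_iff_eq_inv.mpr (mul_left_cancel hb).symm) hy2
      · rw [hA, mul_inv_rev, mul_comm y⁻¹ x⁻¹] at hb
        exact absurd (mul_eq_one_iff_eq_inv.mpr (mul_right_cancel hb)) hx2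
  have hsq : (x * y) * (x * y) = 1 := by
    rcases hB with hB | hB
    · rw [hxy, mul_comm y⁻¹ x] at hB
      exact absurd (mul_eq_one_iff_eq_inv.mpr (mul_left_cancel hB)) hy2
    · rw [hxy] at hB
      have : x * y = (x * y)⁻¹ := hB.trans (by group)
      exact mul_eq_one_iff_eq_inv.mpr this
  -- Step 2 : (x*(y*y))*(x*(y*y)) = 1
  have hC := H x (y * y); rw [hx] at hC
  have hD := H y (x * y); rw [hy] at hD
  have hcomm : y * (x * y) = x * (y * y) := by
    simp [mul_comm, mul_left_comm, mul_assoc]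
  rw [hcomm] at hD
  have hsq2 : (x * (y * y)) * (x * (y * y)) = 1 := by
    have hD1 : y⁻¹ * (x * y) = x := by rw [mul_comm x y]; group
    rcases hC with hC | hC <;> rcases hD with hD | hD
    · rw [hC, hD1] at hD
      exact absurd (mul_left_cancel (hD.trans (mul_one x).symm)) hy2
    · rw [hC] at hD
      have : x * (y * y) = (x * (y * y))⁻¹ := hD.trans (by group)
      exact mul_eq_one_iff_eq_inv.mpr this
    · rw [hC, hD1] at hD
      exfalso; apply hy2
      have := mul_left_cancel (hD.trans (mul_one x).symm)
      rwa [inv_eq_one] at this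
    · rw [hC] at hD
      exfalso; apply hx2
      have e : x * (y * y)⁻¹ = (y * y)⁻¹ * x⁻¹ := hD.trans (by group)
      rw [mul_comm ((y * y)⁻¹) x⁻¹] at e
      exact mul_eq_one_iff_eq_inv.mpr (mul_right_cancel e)
  -- combine
  apply hy2
  calc y * y = (x * y) * (x * y) * (y * y) := by rw [hsq, one_mul]
    _ = (x * (y * y)) * (x * (y * y)) := by simp [mul_comm, mul_left_comm, mul_assoc]
    _ = 1 := hsq2

private lemma xi_main {G : Type*} [CommGroup G] (ψ : G → G)
    (H : ∀ g h : G, ψ (g * h) = ψ g * h ∨ ψ (g * h) = ψ g * h⁻¹)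
    (h1 : ψ 1 = 1) (x : G) (hx2 : x * x ≠ 1) (hx : ψ x = x) :
    ∀ g : G, ψ g = g := by
  intro g
  have hbase := H 1 g
  simp only [one_mul, h1] at hbase
  rcases hbase with hb | hb
  · exact hb
  · by_cases hg2 : g * g = 1
    · rw [hb, inv_eq_of_mul_eq_one_left hg2]
    · exact (xi_key ψ H h1 x g hx2 hg2 hx hb).elim

/-- For an abelian group with an element of order at least 3, the colour-preserving
automorphisms of the complete Cayley graph are exactly the maps `g ↦ a g` and
`g ↦ a g⁻¹`, and the two families are disjoint, so the translations form an
index-2 subgroup. -/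
theorem Xi_of_abelian {G : Type*} [CommGroup G] (g0 : G)
    (hg0 : g0 ≠ 1) (hg0' : g0 ^ 2 ≠ 1) :
    (∀ φ : Equiv.Perm G,
      (∀ g h : G, φ (g * h) = φ g * h ∨ φ (g * h) = φ g * h⁻¹) ↔
        ∃ a : G, (∀ g : G, φ g = a * g) ∨ (∀ g : G, φ g = a * g⁻¹)) ∧
    (∀ a b : G, (fun g : G => a * g⁻¹) ≠ (fun g : G => b * g)) := by
  have hg2 : g0 * g0 ≠ 1 := by rwa [← pow_two]
  constructor
  · intro φ
    constructor
    · intro H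
      set a := φ 1 with ha
      set ψ : G → G := fun g => a⁻¹ * φ g with hψ
      have Hψ : ∀ g h : G, ψ (g * h) = ψ g * h ∨ ψ (g * h) = ψ g * h⁻¹ := by
        intro g h
        rcases H g h with h' | h'
        · left; simp [hψ, h', mul_assoc]
        · right; simp [hψ, h', mul_assoc]
      have hψ1 : ψ 1 = 1 := by simp [hψ, ha]
      have hbase := Hψ 1 g0
      simp only [one_mul, hψ1] at hbase
      refine ⟨a, ?_⟩
      rcases hbase with hb | hb
      · left
        intro g
        have h2 : a⁻¹ * φ g = g := xi_main ψ Hψ hψ1 g0 hg2 hb g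
        exact inv_mul_eq_iff_eq_mul.mp h2
      · right
        set ψ' : G → G := fun g => (ψ g)⁻¹ with hψ'
        have Hψ' : ∀ g h : G, ψ' (g * h) = ψ' g * h ∨ ψ' (g * h) = ψ' g * h⁻¹ := by
          intro g h
          rcases Hψ g h with h' | h'
          · right; simp [hψ', h', mul_inv_rev, mul_comm]
          · left; simp [hψ', h', mul_inv_rev, mul_comm]
        have hψ'1 : ψ' 1 = 1 := by simp [hψ', hψ1]
        have hψ'g0 : ψ' g0 = g0 := by simp [hψ', hb]
        intro g
        have h2 : (a⁻¹ * φ g)⁻¹ = g := xi_main ψ' Hψ' hψ'1 g0 hg2 hψ'g0 g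
        have h3 : a⁻¹ * φ g = g⁻¹ := inv_eq_iff_eq_inv.mp h2
        exact inv_mul_eq_iff_eq_mul.mp h3
    · rintro ⟨a, h | h⟩ <;> intro g h'
      · left; rw [h (g * h'), h g, mul_assoc]
      · right; rw [h (g * h'), h g, mul_inv, mul_assoc]
  · intro a b heq
    have h1 := congrFun heq 1
    simp at h1
    have h2 := congrFun heq g0
    rw [h1] at h2
    have h3 := mul_left_cancel h2
    exact hg2 (mul_eq_one_iff_eq_inv.mpr h3.symm)
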